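/- There exists a ground STRIPS planning problem with initial state s_0 and goal g = {g_1, g_2} consisting of two distinct atoms such that: (i) the problem is solvable and its optimal plan length is 3; (ii) for each ordering (x, y) of (g_1, g_2), there exists a plan from s_0 to a state containing x, every optimal such plan α has length 2, for every such α there exists a plan from succ(s_0, α) to a state containing y, every optimal such plan β has length 2, and every concatenation α followed by β is a valid plan for (s_0, g) of length 4. Hence the greedy goal-decomposition algorithm, which achieves the goal atoms one at a time by optimal subplans, always returns a plan of length 4 although the optimal plan length is 3. -/

import Mathlib

/-- A ground STRIPS action: a triple of sets of atoms. -/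
structure GAct (α : Type*) where
  pre : Set α
  add : Set α
  del : Set α

/-- The successor state of `s` under action `a` (when `a` is applicable, i.e. `a.pre ⊆ s`). -/
def gsucc {α : Type*} (s : Set α) (a : GAct α) : Set α :=
  (s \ a.del) ∪ a.add

/-- Final state after applying a sequence of actions. -/
def succList {α : Type*} : Set α → List (GAct α) → Set α
  | s, [] => s
  | s, a :: l => succList (gsucc s a) l

/-- The action sequence is applicable from `s`:
each action is applicable in the successively progressed state. -/
def AppList {α : Type*} : Set α → List (GAct α) → Prop
  | _, [] => True
  | s, a :: l => a.pre ⊆ s ∧ AppList (gsucc s a) l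

/-- `l` is a plan for `(s₀, g)` using actions from `A`. -/
def IsPlan {α : Type*} (A : Set (GAct α)) (s₀ g : Set α) (l : List (GAct α)) : Prop :=
  (∀ a ∈ l, a ∈ A) ∧ AppList s₀ l ∧ g ⊆ succList s₀ l

/-- `l` is an optimal plan for `(s₀, g)` using actions from `A`: no plan is shorter. -/
def OptPlan {α : Type*} (A : Set (GAct α)) (s₀ g : Set α) (l : List (GAct α)) : Prop :=
  IsPlan A s₀ g l ∧ ∀ l', IsPlan A s₀ g l' → l.length ≤ l'.length

namespace Stmt11Aux

def ac : GAct ℕ := ⟨∅, {0}, ∅⟩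
def af : GAct ℕ := ⟨∅, {1}, ∅⟩
def ah : GAct ℕ := ⟨{1}, {2}, ∅⟩
def ak : GAct ℕ := ⟨{2}, {3, 4}, ∅⟩
def d1 : GAct ℕ := ⟨{0}, {3}, {0}⟩
def d2 : GAct ℕ := ⟨{0}, {4}, {0}⟩

def SA : Set (GAct ℕ) := {ac, af, ah, ak, d1, d2}

lemma mem_SA {a : GAct ℕ} (h : a ∈ SA) :
    a = ac ∨ a = af ∨ a = ah ∨ a = ak ∨ a = d1 ∨ a = d2 := h

lemma key (l : List (GAct ℕ)) (hA : ∀ a ∈ l, a ∈ SA) (happ : AppList ∅ l)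
    (hlen : l.length ≤ 2) :
    (l.length ≤ 1 → (3 : ℕ) ∉ succList ∅ l ∧ (4 : ℕ) ∉ succList ∅ l) ∧
    ((3 : ℕ) ∈ succList ∅ l → l = [ac, d1]) ∧
    ((4 : ℕ) ∈ succList ∅ l → l = [ac, d2]) := by
  match l with
  | [] => simp [succList]
  | [a] =>
    rcases mem_SA (hA a (by simp)) with rfl | rfl | rfl | rfl | rfl | rfl <;>
      simp_all [AppList, succList, gsucc, ac, af, ah, ak, d1, d2, Set.subset_def]
  | [a, b] =>
    rcases mem_SA (hA a (by simp)) with rfl | rfl | rfl | rfl | rfl | rfl <;>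
      rcases mem_SA (hA b (by simp)) with rfl | rfl | rfl | rfl | rfl | rfl <;>
      simp_all [AppList, succList, gsucc, ac, af, ah, ak, d1, d2, Set.subset_def]
  | a :: b :: c :: l => simp at hlen

lemma key2 (i j : ℕ) (hij : i = 3 ∧ j = 4 ∨ i = 4 ∧ j = 3)
    (m : List (GAct ℕ)) (hA : ∀ a ∈ m, a ∈ SA) (happ : AppList {i} m)
    (hlen : m.length ≤ 2) :
    (m.length ≤ 1 → j ∉ succList {i} m) ∧
    (j ∈ succList {i} m → m = [ac, ⟨{0}, {j}, {0}⟩]) := by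
  match m with
  | [] =>
    rcases hij with ⟨rfl, rfl⟩ | ⟨rfl, rfl⟩ <;> simp [succList]
  | [a] =>
    rcases hij with ⟨rfl, rfl⟩ | ⟨rfl, rfl⟩ <;>
    rcases mem_SA (hA a (by simp)) with rfl | rfl | rfl | rfl | rfl | rfl <;>
      simp_all [AppList, succList, gsucc, ac, af, ah, ak, d1, d2, Set.subset_def]
  | [a, b] =>
    rcases hij with ⟨rfl, rfl⟩ | ⟨rfl, rfl⟩ <;>
    rcases mem_SA (hA a (by simp)) with rfl | rfl | rfl | rfl | rfl | rfl <;>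
      rcases mem_SA (hA b (by simp)) with rfl | rfl | rfl | rfl | rfl | rfl <;>
      simp_all [AppList, succList, gsucc, ac, af, ah, ak, d1, d2, Set.subset_def]
  | a :: b :: c :: m => simp at hlen

lemma t_eq (i : ℕ) : succList ∅ [ac, ⟨{0}, {i}, {0}⟩] = {i} := by
  ext x
  simp [succList, gsucc, ac]

lemma di_mem (i : ℕ) (hi : i = 3 ∨ i = 4) : (⟨{0}, {i}, {0}⟩ : GAct ℕ) ∈ SA := by
  rcases hi with rfl | rfl
  · show _ ∈ ({ac, af, ah, ak, d1, d2} : Set (GAct ℕ)); simp [d1]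
  · show _ ∈ ({ac, af, ah, ak, d1, d2} : Set (GAct ℕ)); simp [d2]

lemma plan_i (s : Set ℕ) (i : ℕ) (hi : i = 3 ∨ i = 4) :
    IsPlan SA s {i} [ac, ⟨{0}, {i}, {0}⟩] := by
  refine ⟨?_, ?_, ?_⟩
  · intro a ha
    simp only [List.mem_cons, List.not_mem_nil, or_false] at ha
    rcases ha with rfl | rfl
    · show _ ∈ ({ac, af, ah, ak, d1, d2} : Set (GAct ℕ)); simp
    · exact di_mem i hi
  · refine ⟨by simp [ac], ⟨?_, trivial⟩⟩
    intro x hx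
    simp [gsucc, ac] at hx ⊢
    omega
  · intro x hx
    simp at hx
    subst hx
    simp [succList, gsucc, ac]

lemma main2 (i j : ℕ) (hij : i = 3 ∧ j = 4 ∨ i = 4 ∧ j = 3) :
    (∃ l, IsPlan SA ∅ {i} l) ∧
    ∀ l, OptPlan SA ∅ {i} l →
      l.length = 2 ∧
      (∃ m, IsPlan SA (succList ∅ l) {j} m) ∧
      ∀ m, OptPlan SA (succList ∅ l) {j} m →
        m.length = 2 ∧ IsPlan SA ∅ {3, 4} (l ++ m) ∧ (l ++ m).length = 4 := by
  have hi : i = 3 ∨ i = 4 := by tauto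
  have hj : j = 3 ∨ j = 4 := by tauto
  refine ⟨⟨_, plan_i ∅ i hi⟩, ?_⟩
  intro l hopt
  have hlen2 : l.length ≤ 2 := by
    simpa using hopt.2 _ (plan_i ∅ i hi)
  have hiS : i ∈ succList ∅ l := hopt.1.2.2 rfl
  have hl : l = [ac, ⟨{0}, {i}, {0}⟩] := by
    have h := key l hopt.1.1 hopt.1.2.1 hlen2
    rcases hij with ⟨rfl, rfl⟩ | ⟨rfl, rfl⟩
    · exact h.2.1 hiS
    · exact h.2.2 hiS
  have hS : succList ∅ l = {i} := by rw [hl]; exact t_eq i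
  refine ⟨by rw [hl]; rfl, ⟨_, hS ▸ plan_i {i} j hj⟩, ?_⟩
  intro m hoptm
  have hmlen2 : m.length ≤ 2 := by
    exact hoptm.2 _ (hS ▸ plan_i {i} j hj)
  have hjS : j ∈ succList (succList ∅ l) m := hoptm.1.2.2 rfl
  have hm : m = [ac, ⟨{0}, {j}, {0}⟩] := by
    have hij' : i = 3 ∧ j = 4 ∨ i = 4 ∧ j = 3 := hij
    have h := key2 i j hij' m hoptm.1.1 (hS ▸ hoptm.1.2.1) hmlen2
    exact h.2 (hS ▸ hjS)
  subst hl hm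
  refine ⟨rfl, ⟨?_, ?_, ?_⟩, rfl⟩
  · intro a ha
    simp only [List.mem_append, List.mem_cons, List.not_mem_nil, or_false] at ha
    rcases ha with (rfl | rfl) | (rfl | rfl)
    · show _ ∈ ({ac, af, ah, ak, d1, d2} : Set (GAct ℕ)); simp
    · exact di_mem i hi
    · show _ ∈ ({ac, af, ah, ak, d1, d2} : Set (GAct ℕ)); simp
    · exact di_mem j hj
  · refine ⟨by simp [ac], ?_, by simp [gsucc, ac], ?_, trivial⟩
    · intro x hx; simp [gsucc, ac] at hx ⊢; omega
    · intro x hx; simp [gsucc, ac] at hx ⊢; omega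
  · intro x hx
    rcases hij with ⟨rfl, rfl⟩ | ⟨rfl, rfl⟩ <;>
      simp [succList, gsucc, ac] at hx ⊢ <;> omega


end Stmt11Aux

/-- There exists a ground STRIPS planning problem with two distinct goal atoms `g₁, g₂` such
that: (i) it is solvable with optimal plan length 3; and (ii) for each ordering `(x, y)` of the
two goal atoms, a plan achieving `x` exists, every optimal plan `α` achieving `x` from `s₀` has
length 2, from its end state a plan achieving `y` exists, every optimal such plan `β` has
length 2, and every concatenation `α ++ β` is a valid plan for `(s₀, {g₁, g₂})` of length 4.
Hence the greedy goal-decomposition algorithm always returns a plan of length 4 although the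
optimal plan length is 3. -/
theorem stmt11 :
    ∃ (α : Type) (A : Set (GAct α)) (s₀ : Set α) (g₁ g₂ : α),
      g₁ ≠ g₂ ∧
      s₀.Finite ∧ A.Finite ∧ (∀ a ∈ A, a.pre.Finite ∧ a.add.Finite ∧ a.del.Finite) ∧
      (∃ l, IsPlan A s₀ {g₁, g₂} l ∧ l.length = 3) ∧
      (∀ l, IsPlan A s₀ {g₁, g₂} l → 3 ≤ l.length) ∧
      (∀ x y : α, ((x, y) = (g₁, g₂) ∨ (x, y) = (g₂, g₁)) →
        (∃ l, IsPlan A s₀ {x} l) ∧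
        ∀ l, OptPlan A s₀ {x} l →
          l.length = 2 ∧
          (∃ m, IsPlan A (succList s₀ l) {y} m) ∧
          ∀ m, OptPlan A (succList s₀ l) {y} m →
            m.length = 2 ∧ IsPlan A s₀ {g₁, g₂} (l ++ m) ∧ (l ++ m).length = 4) := by
    classical
  open Stmt11Aux in
  refine ⟨ℕ, SA, ∅, 3, 4, by norm_num, Set.finite_empty, ?_, ?_, ?_, ?_, ?_⟩
  · exact (((((Set.finite_singleton d2).insert d1).insert ak).insert ah).insert af).insert ac
  · intro a ha
    rcases mem_SA ha with rfl | rfl | rfl | rfl | rfl | rfl <;>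
      exact ⟨by first | exact Set.finite_empty | exact Set.finite_singleton _,
             by first | exact Set.finite_singleton _ | exact (Set.finite_singleton _).insert _,
             by first | exact Set.finite_empty | exact Set.finite_singleton _⟩
  · refine ⟨[af, ah, ak], ⟨?_, ?_, ?_⟩, rfl⟩
    · intro a ha
      simp only [List.mem_cons, List.not_mem_nil, or_false] at ha
      rcases ha with rfl | rfl | rfl <;>
        · show _ ∈ ({ac, af, ah, ak, d1, d2} : Set (GAct ℕ)); simp
    · refine ⟨by simp [af], ?_, ?_, trivial⟩
      · intro x hx; simp [gsucc, af, ah] at hx ⊢; omega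
      · intro x hx; simp [gsucc, af, ah, ak] at hx ⊢; omega
    · intro x hx
      simp [succList, gsucc, af, ah, ak] at hx ⊢
      omega
  · intro l hl
    by_contra hlt
    push_neg at hlt
    have h := key l hl.1 hl.2.1 (by omega)
    have h3 : (3 : ℕ) ∈ succList ∅ l := hl.2.2 (by simp)
    have h4 : (4 : ℕ) ∈ succList ∅ l := hl.2.2 (by simp)
    have e1 := h.2.1 h3
    have e2 := h.2.2 h4
    rw [e1] at e2
    simp only [List.cons.injEq, and_true, true_and] at e2
    have : ({3} : Set ℕ) = {4} := congrArg GAct.add e2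
    have : (3 : ℕ) ∈ ({4} : Set ℕ) := this ▸ rfl
    simp at this
  · intro x y hxy
    have hij : x = 3 ∧ y = 4 ∨ x = 4 ∧ y = 3 := by
      rcases hxy with h | h <;> [left; right] <;>
        exact ⟨congrArg Prod.fst h, congrArg Prod.snd h⟩
    exact main2 x y hij
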